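/- arXiv:2205.06172 — 5 statements merged into one kernel-verified Lean document; each statement's English description precedes it below -/
import Mathlib

section
/- Let A and Q be finitely-valued random variables on a finite probability space, and let X_1, …, X_K be mutually independent random variables, each uniformly distributed on F_q^n, such that Q is independent of (X_1, …, X_K). Suppose W_1, …, W_N ∈ {1,…,K} and S_1, …, S_N ⊆ {1,…,K} satisfy, for each i ∈ {1,…,N}: W_i ∉ S_i, W_i ∉ ⋃_{j<i} (S_j ∪ {W_j}), and H(X_{W_i} | (A, Q, (X_k)_{k∈S_i})) = 0. Then H(A) ≥ N · n · log₂ q. -/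
open scoped Classical in
/-- Probability of an event `E` under the weight function `P` on a finite sample space. -/
noncomputable def pr {Ω : Type} [Fintype Ω] (P : Ω → ℝ) (E : Ω → Prop) : ℝ :=
  ∑ ω, if E ω then P ω else 0

/-- Shannon entropy (base 2) of a finitely-valued random variable `X`. -/
noncomputable def entH {Ω α : Type} [Fintype Ω] [Fintype α] (P : Ω → ℝ) (X : Ω → α) : ℝ :=
  (∑ x, Real.negMulLog (pr P fun ω => X ω = x)) / Real.log 2

/-- Conditional Shannon entropy (base 2): `H(X | Y) = H(X, Y) - H(Y)`. -/
noncomputable def condH {Ω α β : Type} [Fintype Ω] [Fintype α] [Fintype β]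
    (P : Ω → ℝ) (X : Ω → α) (Y : Ω → β) : ℝ :=
  entH P (fun ω => (X ω, Y ω)) - entH P Y

section Lib
open Classical Finset Real
variable {Ω α β γ : Type} [Fintype Ω] [Fintype α] [Fintype β] [Fintype γ] {P : Ω → ℝ}

lemma pr_nonneg (hP0 : ∀ ω, 0 ≤ P ω) (E : Ω → Prop) : 0 ≤ pr P E := by
  classical
  refine Finset.sum_nonneg fun ω _ => ?_
  split <;> simp [hP0 ω]

lemma pr_congr {E E' : Ω → Prop} (h : ∀ ω, E ω ↔ E' ω) : pr P E = pr P E' := by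
  unfold pr; exact Finset.sum_congr rfl fun ω _ => by rw [if_congr (h ω) rfl rfl]

lemma pr_true (hP1 : ∑ ω, P ω = 1) : pr P (fun _ => True) = 1 := by
  unfold pr; simpa using hP1

lemma pr_false : pr P (fun _ => False) = 0 := by
  unfold pr; simp

lemma pr_partition (E : Ω → Prop) (Z : Ω → γ) :
    pr P E = ∑ z, pr P (fun ω => E ω ∧ Z ω = z) := by
  classical
  unfold pr
  rw [Finset.sum_comm]
  refine Finset.sum_congr rfl fun ω _ => ?_
  by_cases hE : E ω
  · simp only [hE, true_and, if_true]
    rw [Finset.sum_ite_eq Finset.univ (Z ω) (fun _ => P ω)]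
    simp
  · simp [hE]

lemma sum_pr_eq_one (hP1 : ∑ ω, P ω = 1) (Y : Ω → γ) :
    ∑ y, pr P (fun ω => Y ω = y) = 1 := by
  have h := pr_partition (P := P) (fun _ => True) Y
  rw [pr_true hP1] at h
  rw [h]
  exact Finset.sum_congr rfl fun y _ => pr_congr fun ω => by simp



lemma entH_comp (g : α → γ) (hg : Function.Injective g) (X : Ω → α) :
    entH P (fun ω => g (X ω)) = entH P X := by
  classical
  unfold entH
  congr 1
  rw [← Finset.sum_subset (Finset.subset_univ ((Finset.univ : Finset α).image g))
    (fun y _ hy => ?_), Finset.sum_image (fun a _ b _ h => hg h)]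
  · exact Finset.sum_congr rfl fun x _ =>
      congrArg _ (pr_congr fun ω => ⟨fun h => hg h, fun h => by simp [h]⟩)
  · have : pr P (fun ω => g (X ω) = y) = 0 := by
      have : ∀ ω, (g (X ω) = y) ↔ False := by
        intro ω
        simp only [iff_false]
        intro h
        exact hy (Finset.mem_image.2 ⟨X ω, Finset.mem_univ _, h⟩)
      rw [pr_congr this, pr_false]
    rw [this, Real.negMulLog_zero]

lemma entH_pair_of_indep (hP1 : ∑ ω, P ω = 1) (Y : Ω → β) (Z : Ω → γ)
    (h : ∀ y z, pr P (fun ω => Y ω = y ∧ Z ω = z)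
      = pr P (fun ω => Y ω = y) * pr P (fun ω => Z ω = z)) :
    entH P (fun ω => (Y ω, Z ω)) = entH P Y + entH P Z := by
  unfold entH
  rw [← add_div]
  congr 1
  rw [Fintype.sum_prod_type]
  have e : ∀ y z, Real.negMulLog (pr P fun ω => (Y ω, Z ω) = (y, z))
      = pr P (fun ω => Z ω = z) * Real.negMulLog (pr P fun ω => Y ω = y)
        + pr P (fun ω => Y ω = y) * Real.negMulLog (pr P fun ω => Z ω = z) := by
    intro y z
    rw [pr_congr (fun ω => by simp [Prod.ext_iff] : ∀ ω, ((Y ω, Z ω) = (y, z)) ↔ (Y ω = y ∧ Z ω = z)),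
      h, Real.negMulLog_mul]
  calc (∑ y, ∑ z, Real.negMulLog (pr P fun ω => (Y ω, Z ω) = (y, z)))
      = ∑ y, ∑ z, (pr P (fun ω => Z ω = z) * Real.negMulLog (pr P fun ω => Y ω = y)
        + pr P (fun ω => Y ω = y) * Real.negMulLog (pr P fun ω => Z ω = z)) :=
        Finset.sum_congr rfl fun y _ => Finset.sum_congr rfl fun z _ => e y z
    _ = (∑ y, Real.negMulLog (pr P fun ω => Y ω = y))
        + (∑ z, Real.negMulLog (pr P fun ω => Z ω = z)) := by
        simp only [Finset.sum_add_distrib, ← Finset.sum_mul, ← Finset.mul_sum,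
          sum_pr_eq_one hP1 Y, sum_pr_eq_one hP1 Z]
        ring

lemma entH_uniform (X : Ω → α) (hpos : 0 < Fintype.card α)
    (h : ∀ x, pr P (fun ω => X ω = x) = (Fintype.card α : ℝ)⁻¹) :
    entH P X = Real.logb 2 (Fintype.card α) := by
  have hc : (0:ℝ) < (Fintype.card α : ℝ) := by exact_mod_cast hpos
  unfold entH
  rw [Finset.sum_congr rfl fun x _ => by rw [h x]]
  rw [Finset.sum_const, Finset.card_univ, nsmul_eq_mul]
  rw [Real.negMulLog, Real.log_inv, ← Real.log_div_log]
  field_simp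

lemma negMulLog_add_le {a b : ℝ} (ha : 0 ≤ a) (hb : 0 ≤ b) :
    Real.negMulLog (a + b) ≤ Real.negMulLog a + Real.negMulLog b := by
  rcases ha.eq_or_lt with h | h
  · simp [← h]
  rcases hb.eq_or_lt with h' | h'
  · simp [← h']
  have l1 : Real.log a ≤ Real.log (a + b) := Real.log_le_log h (by linarith)
  have l2 : Real.log b ≤ Real.log (a + b) := Real.log_le_log h' (by linarith)
  simp only [Real.negMulLog, neg_mul]
  nlinarith [mul_nonneg h.le (sub_nonneg.2 l1), mul_nonneg h'.le (sub_nonneg.2 l2)]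

lemma negMulLog_sum_le {ι : Type*} (s : Finset ι) (f : ι → ℝ) (hf : ∀ i ∈ s, 0 ≤ f i) :
    Real.negMulLog (∑ i ∈ s, f i) ≤ ∑ i ∈ s, Real.negMulLog (f i) := by
  classical
  induction s using Finset.induction with
  | empty => simp
  | @insert a s ha ih =>
    rw [Finset.sum_insert ha, Finset.sum_insert ha]
    have h1 := negMulLog_add_le (hf a (Finset.mem_insert_self a s))
      (Finset.sum_nonneg fun i hi => hf i (Finset.mem_insert_of_mem hi))
    have h2 := ih fun i hi => hf i (Finset.mem_insert_of_mem hi)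
    linarith

lemma entH_snd_le (hP0 : ∀ ω, 0 ≤ P ω) (U : Ω → α) (Y : Ω → β) :
    entH P Y ≤ entH P (fun ω => (U ω, Y ω)) := by
  have hlog : 0 < Real.log 2 := Real.log_pos (by norm_num)
  unfold entH
  rw [div_le_div_iff₀ hlog hlog]
  apply mul_le_mul_of_nonneg_right ?_ hlog.le
  rw [Fintype.sum_prod_type_right]
  refine Finset.sum_le_sum fun y _ => ?_
  have hy : pr P (fun ω => Y ω = y) = ∑ u, pr P (fun ω => (U ω, Y ω) = (u, y)) := by
    rw [pr_partition (P := P) (fun ω => Y ω = y) U]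
    exact Finset.sum_congr rfl fun u _ => pr_congr fun ω => by
      constructor
      · rintro ⟨h1, h2⟩; simp [h1, h2]
      · intro h; simp [Prod.ext_iff] at h; exact ⟨h.2, h.1⟩
  rw [hy]
  exact negMulLog_sum_le _ _ fun u _ => pr_nonneg hP0 _
section SSA
open Classical Finset Real
variable {Ω α β γ : Type} [Fintype Ω] [Fintype α] [Fintype β] [Fintype γ] {P : Ω → ℝ}

private lemma swap3 (F : α → β → γ → ℝ) :
    ∑ y, ∑ z, ∑ x, F x y z = ∑ x, ∑ y, ∑ z, F x y z :=
  (Finset.sum_congr rfl fun _ _ => Finset.sum_comm).trans Finset.sum_comm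

lemma condH_pair_le (hP0 : ∀ ω, 0 ≤ P ω) (X : Ω → α) (Y : Ω → β) (Z : Ω → γ) :
    condH P X (fun ω => (Y ω, Z ω)) ≤ condH P X Y := by
  classical
  set p : α → β → γ → ℝ := fun x y z => pr P (fun ω => X ω = x ∧ Y ω = y ∧ Z ω = z) with hpdef
  set a : α → β → ℝ := fun x y => ∑ z, p x y z with hadef
  set b : β → γ → ℝ := fun y z => ∑ x, p x y z with hbdef
  set c : β → ℝ := fun y => ∑ x, ∑ z, p x y z with hcdef
  have hp0 : ∀ x y z, 0 ≤ p x y z := fun x y z => pr_nonneg hP0 _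
  have ha0 : ∀ x y, 0 ≤ a x y := fun x y => Finset.sum_nonneg fun z _ => hp0 x y z
  have hb0 : ∀ y z, 0 ≤ b y z := fun y z => Finset.sum_nonneg fun x _ => hp0 x y z
  have hc0 : ∀ y, 0 ≤ c y := fun y => Finset.sum_nonneg fun x _ => ha0 x y
  have hpa : ∀ x y z, p x y z ≤ a x y := fun x y z =>
    Finset.single_le_sum (fun z _ => hp0 x y z) (Finset.mem_univ z)
  have hpb : ∀ x y z, p x y z ≤ b y z := fun x y z =>
    Finset.single_le_sum (f := fun x => p x y z) (fun x _ => hp0 x y z) (Finset.mem_univ x)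
  have hac : ∀ x y, a x y ≤ c y := fun x y =>
    Finset.single_le_sum (f := fun x => a x y) (fun x _ => ha0 x y) (Finset.mem_univ x)
  -- entropy sums
  have E1 : entH P (fun ω => (X ω, (Y ω, Z ω)))
      = (∑ x, ∑ y, ∑ z, Real.negMulLog (p x y z)) / Real.log 2 := by
    unfold entH
    congr 1
    rw [Fintype.sum_prod_type]
    refine Finset.sum_congr rfl fun x _ => ?_
    rw [Fintype.sum_prod_type]
    refine Finset.sum_congr rfl fun y _ => Finset.sum_congr rfl fun z _ => ?_
    exact congrArg _ (pr_congr fun ω => by simp [Prod.ext_iff])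
  have E2 : entH P (fun ω => (Y ω, Z ω))
      = (∑ y, ∑ z, Real.negMulLog (b y z)) / Real.log 2 := by
    unfold entH
    congr 1
    rw [Fintype.sum_prod_type]
    refine Finset.sum_congr rfl fun y _ => Finset.sum_congr rfl fun z _ => ?_
    have : pr P (fun ω => (Y ω, Z ω) = (y, z)) = b y z := by
      rw [hbdef]
      rw [pr_partition (P := P) (fun ω => (Y ω, Z ω) = (y, z)) X]
      exact Finset.sum_congr rfl fun x _ => pr_congr fun ω => by
        simp [Prod.ext_iff]; tauto
    rw [this]
  have E3 : entH P (fun ω => (X ω, Y ω))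
      = (∑ x, ∑ y, Real.negMulLog (a x y)) / Real.log 2 := by
    unfold entH
    congr 1
    rw [Fintype.sum_prod_type]
    refine Finset.sum_congr rfl fun x _ => Finset.sum_congr rfl fun y _ => ?_
    have : pr P (fun ω => (X ω, Y ω) = (x, y)) = a x y := by
      rw [hadef]
      rw [pr_partition (P := P) (fun ω => (X ω, Y ω) = (x, y)) Z]
      exact Finset.sum_congr rfl fun z _ => pr_congr fun ω => by
        simp [Prod.ext_iff]; tauto
    rw [this]
  have E4 : entH P Y = (∑ y, Real.negMulLog (c y)) / Real.log 2 := by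
    unfold entH
    congr 1
    refine Finset.sum_congr rfl fun y _ => ?_
    have : pr P (fun ω => Y ω = y) = c y := by
      rw [hcdef]
      rw [pr_partition (P := P) (fun ω => Y ω = y) X]
      refine Finset.sum_congr rfl fun x _ => ?_
      rw [pr_partition (P := P) (fun ω => Y ω = y ∧ X ω = x) Z]
      exact Finset.sum_congr rfl fun z _ => pr_congr fun ω => by tauto
    rw [this]
  rw [condH, condH, E1, E2, E3, E4, div_sub_div_same, div_sub_div_same]
  have hlog : (0:ℝ) < Real.log 2 := Real.log_pos (by norm_num)
  rw [div_le_div_iff₀ hlog hlog]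
  refine mul_le_mul_of_nonneg_right ?_ hlog.le
  -- reduce to S1 + S4 ≤ S3 + S2
  have key : ∀ x y z,
      p x y z * (-Real.log (p x y z)) + p x y z * (-Real.log (c y))
        ≤ p x y z * (-Real.log (a x y)) + p x y z * (-Real.log (b y z))
          + (a x y * b y z / c y - p x y z) := by
    intro x y z
    rcases (hp0 x y z).eq_or_lt with h | h
    · rw [← h]
      simp only [zero_mul, zero_add, add_zero, sub_zero]
      exact div_nonneg (mul_nonneg (ha0 x y) (hb0 y z)) (hc0 y)
    · have hax : 0 < a x y := lt_of_lt_of_le h (hpa x y z)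
      have hbx : 0 < b y z := lt_of_lt_of_le h (hpb x y z)
      have hcx : 0 < c y := lt_of_lt_of_le hax (hac x y)
      set q : ℝ := a x y * b y z / c y with hq
      have hqpos : 0 < q := div_pos (mul_pos hax hbx) hcx
      have hl : Real.log (q / p x y z) ≤ q / p x y z - 1 :=
        Real.log_le_sub_one_of_pos (div_pos hqpos h)
      have hexp : Real.log (q / p x y z)
          = Real.log (a x y) + Real.log (b y z) - Real.log (c y) - Real.log (p x y z) := by
        rw [Real.log_div hqpos.ne' h.ne', hq,
          Real.log_div (mul_pos hax hbx).ne' hcx.ne',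
          Real.log_mul hax.ne' hbx.ne']
      have h2 : p x y z * (Real.log (a x y) + Real.log (b y z)
          - Real.log (c y) - Real.log (p x y z)) ≤ q - p x y z := by
        rw [← hexp]
        calc p x y z * Real.log (q / p x y z) ≤ p x y z * (q / p x y z - 1) :=
              mul_le_mul_of_nonneg_left hl h.le
          _ = q - p x y z := by field_simp
      nlinarith [h2]
  have total : ∑ x, ∑ y, ∑ z, (a x y * b y z / c y - p x y z) = 0 := by
    have hq : ∀ x y, ∑ z, a x y * b y z / c y = a x y := by
      intro x y
      by_cases hcy : c y = 0
      · have haz : a x y = 0 := le_antisymm (hcy ▸ hac x y) (ha0 x y)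
        simp [haz]
      · have hsb : ∑ z, b y z = c y := by
          rw [hcdef, hbdef]
          exact Finset.sum_comm
        rw [← Finset.sum_div, ← Finset.mul_sum, hsb, mul_div_assoc,
          div_self hcy, mul_one]
    simp only [Finset.sum_sub_distrib]
    rw [sub_eq_zero]
    exact Finset.sum_congr rfl fun x _ => Finset.sum_congr rfl fun y _ => hq x y
  have T1 : ∀ x y z, Real.negMulLog (p x y z) = p x y z * (-Real.log (p x y z)) := by
    intro x y z; rw [Real.negMulLog]; ring
  have T3 : ∑ x, ∑ y, Real.negMulLog (a x y)
      = ∑ x, ∑ y, ∑ z, p x y z * (-Real.log (a x y)) := by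
    refine Finset.sum_congr rfl fun x _ => Finset.sum_congr rfl fun y _ => ?_
    rw [← Finset.sum_mul]
    have h : (∑ z, p x y z) = a x y := rfl
    rw [h, Real.negMulLog]
    ring
  have T2 : ∑ y, ∑ z, Real.negMulLog (b y z)
      = ∑ x, ∑ y, ∑ z, p x y z * (-Real.log (b y z)) := by
    rw [← swap3]
    refine Finset.sum_congr rfl fun y _ => Finset.sum_congr rfl fun z _ => ?_
    rw [← Finset.sum_mul]
    have h : (∑ x, p x y z) = b y z := rfl
    rw [h, Real.negMulLog]
    ring
  have T4 : ∑ y, Real.negMulLog (c y)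
      = ∑ x, ∑ y, ∑ z, p x y z * (-Real.log (c y)) := by
    have : ∀ y, Real.negMulLog (c y) = ∑ x, ∑ z, p x y z * (-Real.log (c y)) := by
      intro y
      simp only [← Finset.sum_mul]
      have h : (∑ x, ∑ z, p x y z) = c y := rfl
      rw [h, Real.negMulLog]
      ring
    rw [Finset.sum_congr rfl fun y _ => this y, Finset.sum_comm]
  calc (∑ x, ∑ y, ∑ z, Real.negMulLog (p x y z)) - ∑ y, ∑ z, Real.negMulLog (b y z)
      = (∑ x, ∑ y, ∑ z, (p x y z * (-Real.log (p x y z))))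
        - ∑ x, ∑ y, ∑ z, p x y z * (-Real.log (b y z)) := by
        rw [← T2]
        congr 1
        exact Finset.sum_congr rfl fun x _ => Finset.sum_congr rfl fun y _ =>
          Finset.sum_congr rfl fun z _ => T1 x y z
    _ ≤ (∑ x, ∑ y, ∑ z, (p x y z * (-Real.log (a x y))
          + (a x y * b y z / c y - p x y z) - p x y z * (-Real.log (c y)))) := by
        rw [← Finset.sum_sub_distrib]
        refine Finset.sum_le_sum fun x _ => ?_
        rw [← Finset.sum_sub_distrib]
        refine Finset.sum_le_sum fun y _ => ?_
        rw [← Finset.sum_sub_distrib]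
        refine Finset.sum_le_sum fun z _ => ?_
        have := key x y z
        linarith
    _ = (∑ x, ∑ y, Real.negMulLog (a x y)) - ∑ y, Real.negMulLog (c y) := by
        simp only [Finset.sum_add_distrib, Finset.sum_sub_distrib]
        rw [← T3, ← T4]
        have := total
        simp only [Finset.sum_sub_distrib] at this
        linarith
end SSA
section Cor
open Classical Finset Real
variable {Ω α β γ δ : Type} [Fintype Ω] [Fintype α] [Fintype β] [Fintype γ] [Fintype δ]
  {P : Ω → ℝ}

lemma entH_unitconst (hP1 : ∑ ω, P ω = 1) : entH P (fun _ : Ω => ()) = 0 := by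
  have h : pr P (fun ω : Ω => (fun _ : Ω => ()) ω = ()) = 1 := by
    rw [pr_congr (fun ω => by simp : ∀ ω : Ω, ((fun _ : Ω => ()) ω = ()) ↔ True)]
    exact pr_true hP1
  unfold entH
  rw [Finset.univ_unique, Finset.sum_singleton]
  simp only [eq_iff_true_of_subsingleton]
  rw [pr_true hP1, Real.negMulLog_one, zero_div]

lemma condH_comp_left (g : α → γ) (hg : Function.Injective g) (V : Ω → α) (C : Ω → δ) :
    condH P (fun ω => g (V ω)) C = condH P V C := by
  unfold condH
  congr 1
  have hG : Function.Injective (fun vc : α × δ => (g vc.1, vc.2)) := by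
    intro p q h
    simp only [Prod.ext_iff] at h ⊢
    exact ⟨hg h.1, h.2⟩
  exact entH_comp (fun vc : α × δ => (g vc.1, vc.2)) hG (fun ω => (V ω, C ω))

lemma condH_comp_right (X : Ω → α) (g : γ → δ) (hg : Function.Injective g) (Z : Ω → γ) :
    condH P X (fun ω => g (Z ω)) = condH P X Z := by
  unfold condH
  have hG : Function.Injective (fun vc : α × γ => (vc.1, g vc.2)) := by
    intro p q h
    simp only [Prod.ext_iff] at h ⊢
    exact ⟨h.1, hg h.2⟩
  rw [entH_comp g hg Z]
  congr 1
  exact entH_comp (fun vc : α × γ => (vc.1, g vc.2)) hG (fun ω => (X ω, Z ω))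

lemma condH_nonneg (hP0 : ∀ ω, 0 ≤ P ω) (X : Ω → α) (Y : Ω → β) :
    0 ≤ condH P X Y :=
  sub_nonneg.2 (entH_snd_le hP0 X Y)

lemma condH_le_entH (hP0 : ∀ ω, 0 ≤ P ω) (hP1 : ∑ ω, P ω = 1) (X : Ω → α) (Y : Ω → β) :
    condH P X Y ≤ entH P X := by
  have h := condH_pair_le hP0 X (fun _ : Ω => ()) Y
  have e1 : condH P X (fun ω => ((), Y ω)) = condH P X Y :=
    condH_comp_right X (fun y : β => ((), y)) (fun y1 y2 h => congrArg Prod.snd h) Y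
  have e2 : condH P X (fun _ : Ω => ()) = entH P X := by
    unfold condH
    rw [entH_unitconst hP1, sub_zero]
    exact entH_comp (fun x : α => (x, ())) (fun x1 x2 h => congrArg Prod.fst h) X
  rw [e1] at h
  rw [e2] at h
  exact h

lemma condH_le_of_fn (hP0 : ∀ ω, 0 ≤ P ω) (X : Ω → α) (Y : Ω → β) (Z : Ω → γ)
    (g : γ → β) (h : ∀ ω, Y ω = g (Z ω)) : condH P X Z ≤ condH P X Y := by
  have e : condH P X (fun ω => (Y ω, Z ω)) = condH P X Z := by
    have hfun : (fun ω => (Y ω, Z ω)) = fun ω => ((fun z : γ => (g z, z)) (Z ω)) := by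
      funext ω; rw [h ω]
    rw [hfun]
    exact condH_comp_right X (fun z : γ => (g z, z)) (fun z1 z2 h => congrArg Prod.snd h) Z
  rw [← e]
  exact condH_pair_le hP0 X Y Z

lemma condH_chain (X : Ω → α) (Y : Ω → β) (Z : Ω → γ) :
    condH P (fun ω => (X ω, Y ω)) Z = condH P X (fun ω => (Y ω, Z ω)) + condH P Y Z := by
  have hg : Function.Injective (fun t : α × (β × γ) => ((t.1, t.2.1), t.2.2)) := by
    intro t s h
    simp only [Prod.ext_iff] at h ⊢
    tauto
  have e : entH P (fun ω => ((X ω, Y ω), Z ω)) = entH P (fun ω => (X ω, (Y ω, Z ω))) :=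
    entH_comp (fun t : α × (β × γ) => ((t.1, t.2.1), t.2.2)) hg (fun ω => (X ω, (Y ω, Z ω)))
  unfold condH
  rw [e]
  ring
end Cor
section Marg
open Classical Finset Real
variable {Ω α β V : Type} [Fintype Ω] [Fintype α] [Fintype β] [Fintype V] {P : Ω → ℝ}

lemma condH_const (k : α) {δ : Type} [Fintype δ] (C : Ω → δ) :
    condH P (fun _ : Ω => k) C = 0 := by
  unfold condH
  rw [sub_eq_zero]
  exact entH_comp (fun c : δ => (k, c)) (fun a b h => congrArg Prod.snd h) C

lemma pr_marginal {K : ℕ}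
    (hP0 : ∀ ω, 0 ≤ P ω) (hP1 : ∑ ω, P ω = 1) (hVpos : 0 < Fintype.card V)
    (Q : Ω → β) (X : Fin K → Ω → V)
    (hXindep : ∀ f : Fin K → V,
      pr P (fun ω => ∀ i, X i ω = f i) = ∏ i, pr P (fun ω => X i ω = f i))
    (hXunif : ∀ (i : Fin K) (v : V),
      pr P (fun ω => X i ω = v) = (Fintype.card V : ℝ)⁻¹)
    (hQindep : ∀ (b : β) (f : Fin K → V),
      pr P (fun ω => Q ω = b ∧ ∀ i, X i ω = f i)
        = pr P (fun ω => Q ω = b) * pr P (fun ω => ∀ i, X i ω = f i))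
    (T : Finset (Fin K)) (b : β) (g : ↥T → V) :
    pr P (fun ω => Q ω = b ∧ ∀ k : ↥T, X k.1 ω = g k)
      = pr P (fun ω => Q ω = b) * ((Fintype.card V : ℝ)⁻¹) ^ T.card := by
  classical
  set c : ℕ := Fintype.card V with hc
  have hc0 : ((c : ℝ)) ≠ 0 := by
    have : (0:ℝ) < (c:ℝ) := by exact_mod_cast hVpos
    exact this.ne'
  rw [pr_partition (P := P) _ (fun ω => fun i : Fin K => X i ω)]
  set Agr : Finset (Fin K → V) := Finset.univ.filter (fun f => ∀ k : ↥T, f k.1 = g k) with hAgr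
  rw [← Finset.sum_subset (Finset.subset_univ Agr) (fun f _ hfA => ?_)]
  · have hterm : ∀ f ∈ Agr,
        pr P (fun ω => (Q ω = b ∧ ∀ k : ↥T, X k.1 ω = g k) ∧ (fun i => X i ω) = f)
          = pr P (fun ω => Q ω = b) * ((c : ℝ)⁻¹) ^ K := by
      intro f hfA
      have hfg : ∀ k : ↥T, f k.1 = g k := (Finset.mem_filter.1 hfA).2
      have : pr P (fun ω => (Q ω = b ∧ ∀ k : ↥T, X k.1 ω = g k) ∧ (fun i => X i ω) = f)
          = pr P (fun ω => Q ω = b ∧ ∀ i, X i ω = f i) := by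
        refine pr_congr fun ω => ?_
        constructor
        · rintro ⟨⟨hQ, -⟩, hf⟩
          exact ⟨hQ, fun i => congrFun hf i⟩
        · rintro ⟨hQ, hall⟩
          exact ⟨⟨hQ, fun k => by rw [hall k.1, hfg k]⟩, funext hall⟩
      rw [this, hQindep b f, hXindep f]
      congr 1
      rw [Finset.prod_congr rfl (fun i _ => hXunif i (f i)), Finset.prod_const,
        Finset.card_univ, Fintype.card_fin]
    rw [Finset.sum_congr rfl hterm, Finset.sum_const, nsmul_eq_mul]
    have hcard : Agr.card = c ^ (K - T.card) := by
      have h1 : Agr.card = Fintype.card {f : Fin K → V // ∀ k : ↥T, f k.1 = g k} :=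
        (Fintype.card_subtype _).symm
      have e : ({k : Fin K // k ∉ T} → V) ≃ {f : Fin K → V // ∀ k : ↥T, f k.1 = g k} :=
        { toFun := fun h => ⟨fun k => if hk : k ∈ T then g ⟨k, hk⟩ else h ⟨k, hk⟩,
            fun k => by simp [k.2]⟩
          invFun := fun f k => f.1 k.1
          left_inv := fun h => by
            funext k
            simp [k.2]
          right_inv := fun f => by
            apply Subtype.ext
            funext k
            by_cases hk : k ∈ T
            · simp only [dif_pos hk]
              exact (f.2 ⟨k, hk⟩).symm
            · simp only [dif_neg hk] }
      have h2 : Fintype.card {f : Fin K → V // ∀ k : ↥T, f k.1 = g k}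
          = Fintype.card ({k : Fin K // k ∉ T} → V) := (Fintype.card_congr e).symm
      have h3 : Fintype.card ({k : Fin K // k ∉ T} → V)
          = c ^ Fintype.card {k : Fin K // k ∉ T} := Fintype.card_fun
      have h4 : Fintype.card {k : Fin K // k ∉ T} = K - T.card := by
        rw [Fintype.card_subtype_compl]
        congr 1
        · exact Fintype.card_fin K
        · exact (Fintype.card_coe T)
      rw [h1, h2, h3, h4]
    rw [hcard]
    have ht : T.card ≤ K := by
      have := Finset.card_le_univ T
      simpa using this
    have hKt : K - T.card + T.card = K := Nat.sub_add_cancel ht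
    have key : ((c:ℝ)) ^ (K - T.card) * (((c:ℝ)) ^ K)⁻¹ = (((c:ℝ)) ^ T.card)⁻¹ := by
      have hsplit : ((c:ℝ)) ^ K = ((c:ℝ)) ^ (K - T.card) * ((c:ℝ)) ^ T.card := by
        rw [← pow_add, hKt]
      rw [hsplit, mul_inv, ← mul_assoc, mul_inv_cancel₀ (pow_ne_zero _ hc0), one_mul]
    push_cast
    rw [inv_pow, inv_pow]
    linear_combination (pr P fun ω => Q ω = b) * key
  · -- f outside Agr contributes zero
    have hiff : ∀ ω, ((Q ω = b ∧ ∀ k : ↥T, X k.1 ω = g k) ∧ (fun i => X i ω) = f) ↔ False := by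
      intro ω
      simp only [iff_false]
      rintro ⟨⟨-, hall⟩, hfeq⟩
      exact hfA (Finset.mem_filter.2 ⟨Finset.mem_univ f,
        fun k => by rw [← congrFun hfeq k.1]; exact hall k⟩)
    rw [pr_congr hiff, pr_false]
end Marg
end Lib

theorem stmt1 {Ω α β F : Type} [Fintype Ω] [Fintype α] [Fintype β]
    [Field F] [Fintype F] {n K N : ℕ}
    (P : Ω → ℝ) (hP0 : ∀ ω, 0 ≤ P ω) (hP1 : ∑ ω, P ω = 1)
    (A : Ω → α) (Q : Ω → β) (X : Fin K → Ω → (Fin n → F))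
    -- the X_i are mutually independent
    (hXindep : ∀ f : Fin K → (Fin n → F),
      pr P (fun ω => ∀ i, X i ω = f i) = ∏ i, pr P (fun ω => X i ω = f i))
    -- each X_i is uniformly distributed on F_q^n
    (hXunif : ∀ (i : Fin K) (v : Fin n → F),
      pr P (fun ω => X i ω = v) = (Fintype.card (Fin n → F) : ℝ)⁻¹)
    -- Q is independent of the tuple (X_1, ..., X_K)
    (hQindep : ∀ (b : β) (f : Fin K → (Fin n → F)),
      pr P (fun ω => Q ω = b ∧ ∀ i, X i ω = f i)
        = pr P (fun ω => Q ω = b) * pr P (fun ω => ∀ i, X i ω = f i))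
    (W : Fin N → Fin K) (S : Fin N → Finset (Fin K))
    -- W_i ∉ S_i
    (hWS : ∀ i, W i ∉ S i)
    -- W_i ∉ ⋃_{j < i} (S_j ∪ {W_j})
    (hWnew : ∀ i j : Fin N, j < i → W i ∉ S j ∪ {W j})
    -- H(X_{W_i} | (A, Q, (X_k)_{k ∈ S_i})) = 0
    (hdec : ∀ i : Fin N,
      condH P (X (W i)) (fun ω => (A ω, Q ω, fun k : S i => X k.1 ω)) = 0) :
    (N : ℝ) * ((n : ℝ) * Real.logb 2 (Fintype.card F)) ≤ entH P A := by
  classical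
  have hqn : 0 < Fintype.card (Fin n → F) := Fintype.card_pos
  set c : ℕ := Fintype.card (Fin n → F) with hcdef
  have hcR : (0:ℝ) < (c:ℝ) := by exact_mod_cast hqn
  have hWinj : Function.Injective W := by
    intro i j hij
    by_contra hne
    rcases lt_or_gt_of_ne hne with h | h
    · exact hWnew j i h (Finset.mem_union_right _ (Finset.mem_singleton.2 hij.symm))
    · exact hWnew i j h (Finset.mem_union_right _ (Finset.mem_singleton.2 hij))
  set M : Finset (Fin K) := Finset.univ.image W with hMdef
  set E : Finset (Fin K) := Mᶜ with hEdef
  have hMcard : M.card = N := by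
    rw [hMdef, Finset.card_image_of_injective _ hWinj, Finset.card_univ, Fintype.card_fin]
  have hNK : N ≤ K := by
    have h := Finset.card_le_univ M
    rw [hMcard] at h
    simpa using h
  have hEcard : E.card = K - N := by
    rw [hEdef, Finset.card_compl, Fintype.card_fin, hMcard]
  set C : Ω → β × (↥E → (Fin n → F)) := fun ω => (Q ω, fun k : ↥E => X k.1 ω) with hCdef
  set AC : Ω → α × (β × (↥E → (Fin n → F))) := fun ω => (A ω, C ω) with hACdef
  set VM : Ω → (↥M → (Fin n → F)) := fun ω => fun k : ↥M => X k.1 ω with hVMdef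
  -- marginal facts
  have hmarg : ∀ (T : Finset (Fin K)) (b : β) (g : ↥T → (Fin n → F)),
      pr P (fun ω => Q ω = b ∧ ∀ k : ↥T, X k.1 ω = g k)
        = pr P (fun ω => Q ω = b) * ((c : ℝ)⁻¹) ^ T.card :=
    fun T b g => pr_marginal hP0 hP1 hqn Q X hXindep hXunif hQindep T b g
  have hVT : ∀ (T : Finset (Fin K)) (g : ↥T → (Fin n → F)),
      pr P (fun ω => (fun k : ↥T => X k.1 ω) = g) = ((c : ℝ)⁻¹) ^ T.card := by
    intro T g
    rw [pr_partition (P := P) _ Q]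
    have h : ∀ b, pr P (fun ω => (fun k : ↥T => X k.1 ω) = g ∧ Q ω = b)
        = pr P (fun ω => Q ω = b) * ((c : ℝ)⁻¹) ^ T.card := by
      intro b
      rw [← hmarg T b g]
      refine pr_congr fun ω => ?_
      constructor
      · rintro ⟨hg, hb⟩; exact ⟨hb, fun k => congrFun hg k⟩
      · rintro ⟨hb, hg⟩; exact ⟨funext hg, hb⟩
    rw [Finset.sum_congr rfl fun b _ => h b, ← Finset.sum_mul, sum_pr_eq_one hP1 Q, one_mul]
  have hQVT : ∀ (T : Finset (Fin K)) (b : β) (g : ↥T → (Fin n → F)),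
      pr P (fun ω => Q ω = b ∧ (fun k : ↥T => X k.1 ω) = g)
        = pr P (fun ω => Q ω = b) * pr P (fun ω => (fun k : ↥T => X k.1 ω) = g) := by
    intro T b g
    rw [hVT T g, ← hmarg T b g]
    refine pr_congr fun ω => ?_
    constructor
    · rintro ⟨hb, hg⟩; exact ⟨hb, fun k => congrFun hg k⟩
    · rintro ⟨hb, hg⟩; exact ⟨hb, funext hg⟩
  have hentVT : ∀ T : Finset (Fin K),
      entH P (fun ω => fun k : ↥T => X k.1 ω) = Real.logb 2 ((c:ℝ) ^ T.card) := by
    intro T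
    have hcard : Fintype.card (↥T → (Fin n → F)) = c ^ T.card := by
      rw [Fintype.card_fun, Fintype.card_coe]
    have huni : ∀ g : ↥T → (Fin n → F), pr P (fun ω => (fun k : ↥T => X k.1 ω) = g)
        = ((Fintype.card (↥T → (Fin n → F)) : ℝ))⁻¹ := by
      intro g
      rw [hVT T g, hcard]
      push_cast
      rw [inv_pow]
    have hpos' : 0 < Fintype.card (↥T → (Fin n → F)) := by
      rw [hcard]; exact pow_pos hqn _
    rw [entH_uniform _ hpos' huni, hcard]
    push_cast
    rfl
  have hentQVT : ∀ T : Finset (Fin K),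
      entH P (fun ω => (Q ω, fun k : ↥T => X k.1 ω))
        = entH P Q + Real.logb 2 ((c:ℝ) ^ T.card) := by
    intro T
    rw [entH_pair_of_indep hP1 Q _ (fun b g => hQVT T b g), hentVT T]
  have hXallunif : ∀ f : Fin K → (Fin n → F),
      pr P (fun ω => (fun i => X i ω) = f) = ((Fintype.card (Fin K → Fin n → F) : ℝ))⁻¹ := by
    intro f
    rw [pr_congr (fun ω => funext_iff), hXindep f]
    rw [Finset.prod_congr rfl fun i _ => hXunif i (f i), Finset.prod_const,
      Finset.card_univ, Fintype.card_fin, Fintype.card_fun, Fintype.card_fin]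
    push_cast
    rw [inv_pow]
  have hentXall : entH P (fun ω => fun i : Fin K => X i ω) = Real.logb 2 ((c:ℝ) ^ K) := by
    rw [entH_uniform _ Fintype.card_pos hXallunif, Fintype.card_fun, Fintype.card_fin]
    push_cast
    rfl
  have hQXall : ∀ (b : β) (f : Fin K → (Fin n → F)),
      pr P (fun ω => Q ω = b ∧ (fun i => X i ω) = f)
        = pr P (fun ω => Q ω = b) * pr P (fun ω => (fun i => X i ω) = f) := by
    intro b f
    rw [pr_congr (fun ω => and_congr_right fun _ => funext_iff), hQindep b f]
    congr 1
    exact (pr_congr fun ω => funext_iff).symm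
  have hentQXall : entH P (fun ω => (Q ω, fun i : Fin K => X i ω))
      = entH P Q + Real.logb 2 ((c:ℝ) ^ K) := by
    rw [entH_pair_of_indep hP1 _ _ hQXall, hentXall]
  -- entH of (VM, C)
  have hψinj : Function.Injective (fun bf : β × (Fin K → Fin n → F) =>
      ((fun k : ↥M => bf.2 k.1, (bf.1, fun k : ↥E => bf.2 k.1)) :
        (↥M → Fin n → F) × (β × (↥E → Fin n → F)))) := by
    intro p q h
    simp only [Prod.ext_iff] at h
    obtain ⟨h1, h2, h3⟩ := h
    refine Prod.ext h2 (funext fun i => ?_)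
    by_cases hi : i ∈ M
    · exact congrFun h1 ⟨i, hi⟩
    · exact congrFun h3 ⟨i, by rw [hEdef]; exact Finset.mem_compl.2 hi⟩
  have hentVMC : entH P (fun ω => (VM ω, C ω)) = entH P Q + Real.logb 2 ((c:ℝ) ^ K) := by
    rw [← hentQXall]
    exact entH_comp _ hψinj (fun ω => (Q ω, fun i : Fin K => X i ω))
  have hentC : entH P C = entH P Q + Real.logb 2 ((c:ℝ) ^ E.card) := hentQVT E
  -- the decoding claim
  set Mset : ℕ → Finset (Fin K) :=
    fun i => (Finset.univ.filter (fun j : Fin N => (j:ℕ) < i)).image W with hMsetdef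
  have claim : ∀ i : ℕ, condH P (fun ω => fun k : ↥(Mset i) => X k.1 ω) AC = 0 := by
    intro i
    induction i with
    | zero =>
      have h0 : Mset 0 = ∅ := by
        simp [hMsetdef]
      rw [h0]
      haveI : IsEmpty (↥(∅ : Finset (Fin K))) := by
        constructor; rintro ⟨x, hx⟩; exact (Finset.notMem_empty x) hx
      have hconst : (fun ω : Ω => fun k : ↥(∅ : Finset (Fin K)) => X k.1 ω)
          = fun _ : Ω => (fun k : ↥(∅ : Finset (Fin K)) => isEmptyElim k) := by
        funext ω k
        exact isEmptyElim k
      rw [hconst]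
      exact condH_const _ AC
    | succ i ih =>
      by_cases hiN : i < N
      · have hMsucc : Mset (i+1) = insert (W ⟨i, hiN⟩) (Mset i) := by
          have h1 : (Finset.univ.filter (fun j : Fin N => (j:ℕ) < i+1))
              = insert (⟨i, hiN⟩ : Fin N) (Finset.univ.filter (fun j : Fin N => (j:ℕ) < i)) := by
            ext j
            simp only [Finset.mem_filter, Finset.mem_insert, Finset.mem_univ, true_and]
            constructor
            · intro hj
              rcases Nat.lt_succ_iff_lt_or_eq.1 hj with h | h
              · exact Or.inr h
              · exact Or.inl (Fin.ext h)
            · rintro (h | h)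
              · rw [h]; exact Nat.lt_succ_self i
              · exact Nat.lt_succ_of_lt h
          simp only [hMsetdef]
          rw [h1, Finset.image_insert]
        have hwT : W ⟨i, hiN⟩ ∉ Mset i := by
          intro hmem
          simp only [hMsetdef, Finset.mem_image, Finset.mem_filter, Finset.mem_univ,
            true_and] at hmem
          obtain ⟨j, hji, hjw⟩ := hmem
          have hjlt : j < (⟨i, hiN⟩ : Fin N) := hji
          exact hWnew ⟨i, hiN⟩ j hjlt
            (Finset.mem_union_right _ (Finset.mem_singleton.2 hjw.symm))
        rw [hMsucc]
        have hφinj : Function.Injective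
            (fun av : (Fin n → F) × (↥(Mset i) → (Fin n → F)) =>
              (fun k : ↥(insert (W ⟨i, hiN⟩) (Mset i)) =>
                if hk : k.1 ∈ Mset i then av.2 ⟨k.1, hk⟩ else av.1)) := by
          intro p q h
          refine Prod.ext ?_ (funext fun k => ?_)
          · have h' := congrFun h ⟨W ⟨i, hiN⟩, Finset.mem_insert_self _ _⟩
            simpa [dif_neg hwT] using h'
          · have h' := congrFun h ⟨k.1, Finset.mem_insert_of_mem k.2⟩
            simpa [dif_pos k.2] using h'
        have hrecode : (fun ω : Ω => fun k : ↥(insert (W ⟨i, hiN⟩) (Mset i)) => X k.1 ω)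
            = fun ω => (fun av : (Fin n → F) × (↥(Mset i) → (Fin n → F)) =>
              (fun k : ↥(insert (W ⟨i, hiN⟩) (Mset i)) =>
                if hk : k.1 ∈ Mset i then av.2 ⟨k.1, hk⟩ else av.1))
              (X (W ⟨i, hiN⟩) ω, fun k : ↥(Mset i) => X k.1 ω) := by
          funext ω
          funext k
          by_cases hk : k.1 ∈ Mset i
          · simp only [dif_pos hk]
          · have hkw : k.1 = W ⟨i, hiN⟩ := by
              rcases Finset.mem_insert.1 k.2 with h | h
              · exact h
              · exact absurd h hk
            simp only [hkw, dif_neg hwT]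
        rw [hrecode]
        rw [condH_comp_left _ hφinj
          (fun ω => (X (W ⟨i, hiN⟩) ω, fun k : ↥(Mset i) => X k.1 ω)) AC]
        rw [condH_chain (X (W ⟨i, hiN⟩)) (fun ω => fun k : ↥(Mset i) => X k.1 ω) AC]
        rw [ih, add_zero]
        refine le_antisymm ?_ (condH_nonneg hP0 _ _)
        rw [← hdec ⟨i, hiN⟩]
        have hSsub : ∀ k : Fin K, k ∈ S ⟨i, hiN⟩ → k ∉ Mset i → k ∈ E := by
          intro k hkS hkT
          rw [hEdef, Finset.mem_compl]
          intro hkM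
          rw [hMdef] at hkM
          obtain ⟨j, -, hjk⟩ := Finset.mem_image.1 hkM
          rcases lt_trichotomy j (⟨i, hiN⟩ : Fin N) with h | h | h
          · apply hkT
            simp only [hMsetdef]
            exact Finset.mem_image.2 ⟨j, Finset.mem_filter.2 ⟨Finset.mem_univ j, h⟩, hjk⟩
          · rw [h] at hjk
            exact hWS ⟨i, hiN⟩ (hjk ▸ hkS)
          · exact hWnew j ⟨i, hiN⟩ h (Finset.mem_union_left _ (hjk ▸ hkS))
        refine condH_le_of_fn hP0 (X (W ⟨i, hiN⟩)) _ _
          (fun t : (↥(Mset i) → (Fin n → F)) × (α × (β × (↥E → (Fin n → F)))) =>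
            ((t.2.1, t.2.2.1, fun k : ↥(S ⟨i, hiN⟩) =>
              if hk : k.1 ∈ Mset i then t.1 ⟨k.1, hk⟩
              else t.2.2.2 ⟨k.1, hSsub k.1 k.2 hk⟩) :
              α × β × (↥(S ⟨i, hiN⟩) → (Fin n → F))))
          (fun ω => ?_)
        refine Prod.ext rfl (Prod.ext rfl (funext fun k => ?_))
        by_cases hk : k.1 ∈ Mset i
        · simp only [dif_pos hk]
        · simp only [dif_neg hk]; rfl
      · have heq : Mset (i+1) = Mset i := by
          simp only [hMsetdef]
          congr 1
          ext j
          simp only [Finset.mem_filter, Finset.mem_univ, true_and]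
          have hj := j.isLt
          have hNi := Nat.le_of_not_lt hiN
          omega
        rw [heq]
        exact ih
  have hMN : Mset N = M := by
    simp only [hMsetdef, hMdef]
    rw [Finset.filter_true_of_mem (fun j _ => j.isLt)]
  have hT2 : condH P VM AC = 0 := by
    have h := claim N
    rw [hMN] at h
    exact h
  -- final assembly
  have h1 : entH P (fun ω => (VM ω, C ω)) ≤ entH P (fun ω => (VM ω, AC ω)) := by
    have hswapinj : Function.Injective
        (fun t : α × ((↥M → Fin n → F) × (β × (↥E → Fin n → F))) =>
          ((t.2.1, (t.1, t.2.2)) : (↥M → Fin n → F) × (α × (β × (↥E → Fin n → F))))) := by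
      intro p q h
      simp only [Prod.ext_iff] at h ⊢
      tauto
    have hswap : entH P (fun ω => (VM ω, AC ω))
        = entH P (fun ω => (A ω, (VM ω, C ω))) :=
      entH_comp _ hswapinj (fun ω => (A ω, (VM ω, C ω)))
    calc entH P (fun ω => (VM ω, C ω)) ≤ entH P (fun ω => (A ω, (VM ω, C ω))) :=
          entH_snd_le hP0 A (fun ω => (VM ω, C ω))
      _ = entH P (fun ω => (VM ω, AC ω)) := hswap.symm
  have h2 : condH P A C ≤ entH P A := condH_le_entH hP0 hP1 A C
  have e2 : condH P A C = entH P AC - entH P C := rfl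
  have e3 : condH P VM AC = entH P (fun ω => (VM ω, AC ω)) - entH P AC := rfl
  have harith : Real.logb 2 ((c:ℝ) ^ K) - Real.logb 2 ((c:ℝ) ^ E.card)
      = (N:ℝ) * ((n:ℝ) * Real.logb 2 (Fintype.card F)) := by
    have hcq : (c:ℝ) = ((Fintype.card F : ℝ)) ^ n := by
      rw [hcdef, Fintype.card_fun, Fintype.card_fin]
      push_cast
      rfl
    rw [hEcard, Real.logb_pow, Real.logb_pow, hcq, Real.logb_pow, Nat.cast_sub hNK]
    ring
  rw [← harith]
  rw [e3] at hT2
  rw [e2] at h2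
  linarith [h1, h2, hT2, hentVMC, hentC]
end

section
/- Let K and M be integers with 1 ≤ M ≤ K−1 and let λ_1 ≥ λ_2 ≥ ⋯ ≥ λ_K > 0 be real numbers. For any indices i_1 ≤ i_2 in {1,…,K}: Σ_{T} 1/λ_T̄, summed over all M-element subsets T of {1,…,K}∖{i_1}, is at most Σ_{T} 1/λ_T̄ summed over all M-element subsets T of {1,…,K}∖{i_2}. -/
/-- `lbar K lam T = Σ_{k ∈ {1,…,K} \ T} λ_k`. -/
noncomputable def lbar (K : ℕ) (lam : ℕ → ℝ) (T : Finset ℕ) : ℝ :=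
  ∑ k ∈ Finset.Icc 1 K \ T, lam k

/-- The joint pmf `p(w, s) = (1 / C(K,M)) · λ_w / λ_s̄`. -/
noncomputable def pjoint (K M : ℕ) (lam : ℕ → ℝ) (w : ℕ) (s : Finset ℕ) : ℝ :=
  (1 / (K.choose M : ℝ)) * (lam w / lbar K lam s)

/-- The marginal `p_W(w) = Σ_s p(w, s)`, summed over `M`-subsets of `{1,…,K} \ {w}`. -/
noncomputable def pW (K M : ℕ) (lam : ℕ → ℝ) (w : ℕ) : ℝ :=
  ∑ s ∈ Finset.powersetCard M ((Finset.Icc 1 K).erase w), pjoint K M lam w s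

lemma lbar_pos {K M : ℕ} (hMK : M + 1 ≤ K) (lam : ℕ → ℝ)
    (hpos : ∀ i, 1 ≤ i → i ≤ K → 0 < lam i) {T : Finset ℕ} (hT : T.card = M) :
    0 < lbar K lam T := by
  have hne : (Finset.Icc 1 K \ T).Nonempty := by
    rw [← Finset.card_pos]
    have h1 := Finset.le_card_sdiff T (Finset.Icc 1 K)
    rw [Nat.card_Icc] at h1
    omega
  apply Finset.sum_pos _ hne
  intro k hk
  rw [Finset.mem_sdiff, Finset.mem_Icc] at hk
  exact hpos k hk.1.1 hk.1.2

lemma lbar_eq_sub {K : ℕ} (lam : ℕ → ℝ) {T : Finset ℕ} (hT : T ⊆ Finset.Icc 1 K) :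
    lbar K lam T = (∑ k ∈ Finset.Icc 1 K, lam k) - ∑ k ∈ T, lam k := by
  rw [lbar, Finset.sum_sdiff_eq_sub hT]

theorem stmt5 {K M : ℕ} (hM : 1 ≤ M) (hMK : M + 1 ≤ K) (lam : ℕ → ℝ)
    (hmono : ∀ i j, 1 ≤ i → i ≤ j → j ≤ K → lam j ≤ lam i)
    (hpos : ∀ i, 1 ≤ i → i ≤ K → 0 < lam i)
    (i₁ i₂ : ℕ) (hi₁ : i₁ ∈ Finset.Icc 1 K) (hi₂ : i₂ ∈ Finset.Icc 1 K) (h12 : i₁ ≤ i₂) :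
    ∑ T ∈ Finset.powersetCard M ((Finset.Icc 1 K).erase i₁), 1 / lbar K lam T
      ≤ ∑ T ∈ Finset.powersetCard M ((Finset.Icc 1 K).erase i₂), 1 / lbar K lam T := by
  rcases eq_or_lt_of_le h12 with rfl | hlt
  · exact le_refl _
  have hne : i₁ ≠ i₂ := ne_of_lt hlt
  set S := Finset.Icc 1 K with hS
  rw [Finset.mem_Icc] at hi₁ hi₂
  rw [← Finset.sum_filter_add_sum_filter_not (Finset.powersetCard M (S.erase i₁))
      (fun T => i₂ ∈ T),
      ← Finset.sum_filter_add_sum_filter_not (Finset.powersetCard M (S.erase i₂))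
      (fun T => i₁ ∈ T)]
  have hcommon : (Finset.powersetCard M (S.erase i₁)).filter (fun T => ¬ i₂ ∈ T)
      = (Finset.powersetCard M (S.erase i₂)).filter (fun T => ¬ i₁ ∈ T) := by
    ext T
    simp only [Finset.mem_filter, Finset.mem_powersetCard, Finset.subset_erase]
    tauto
  refine add_le_add ?_ (le_of_eq (by rw [hcommon]))
  -- the swap map
  have hmem : ∀ T ∈ (Finset.powersetCard M (S.erase i₁)).filter (fun T => i₂ ∈ T),
      insert i₁ (T.erase i₂) ∈
        (Finset.powersetCard M (S.erase i₂)).filter (fun T => i₁ ∈ T) := by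
    intro T hT
    simp only [Finset.mem_filter, Finset.mem_powersetCard, Finset.subset_erase] at hT ⊢
    obtain ⟨⟨⟨hTS, hi1T⟩, hcard⟩, hi2T⟩ := hT
    refine ⟨⟨⟨?_, ?_⟩, ?_⟩, Finset.mem_insert_self _ _⟩
    · intro x hx
      rcases Finset.mem_insert.1 hx with rfl | hx
      · rwa [Finset.mem_Icc]
      · exact hTS (Finset.erase_subset _ _ hx)
    · intro hmem
      rcases Finset.mem_insert.1 hmem with h | h
      · exact hne h.symm
      · exact (Finset.ne_of_mem_erase h) rfl
    · rw [Finset.card_insert_of_notMem (fun h => hi1T (Finset.erase_subset _ _ h)),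
        Finset.card_erase_of_mem hi2T, hcard]
      omega
  have hterm : ∀ T ∈ (Finset.powersetCard M (S.erase i₁)).filter (fun T => i₂ ∈ T),
      1 / lbar K lam T ≤ 1 / lbar K lam (insert i₁ (T.erase i₂)) := by
    intro T hT
    have hmemT := hmem T hT
    simp only [Finset.mem_filter, Finset.mem_powersetCard, Finset.subset_erase] at hT hmemT
    obtain ⟨⟨⟨hTS, hi1T⟩, hcard⟩, hi2T⟩ := hT
    have hpos' : 0 < lbar K lam (insert i₁ (T.erase i₂)) :=
      lbar_pos hMK lam hpos hmemT.1.2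
    apply one_div_le_one_div_of_le hpos'
    rw [lbar_eq_sub lam hTS, lbar_eq_sub lam hmemT.1.1.1]
    have hsum : ∑ k ∈ insert i₁ (T.erase i₂), lam k
        = lam i₁ + (∑ k ∈ T, lam k - lam i₂) := by
      rw [Finset.sum_insert (fun h => hi1T (Finset.erase_subset _ _ h)),
        Finset.sum_erase_eq_sub hi2T]
    rw [hsum]
    have : lam i₂ ≤ lam i₁ := hmono i₁ i₂ hi₁.1 h12 hi₂.2
    linarith
  calc ∑ T ∈ (Finset.powersetCard M (S.erase i₁)).filter (fun T => i₂ ∈ T), 1 / lbar K lam T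
      ≤ ∑ T ∈ (Finset.powersetCard M (S.erase i₁)).filter (fun T => i₂ ∈ T),
          1 / lbar K lam (insert i₁ (T.erase i₂)) := Finset.sum_le_sum hterm
    _ = ∑ T ∈ (Finset.powersetCard M (S.erase i₂)).filter (fun T => i₁ ∈ T),
          1 / lbar K lam T := by
        apply Finset.sum_nbij' (fun T => insert i₁ (T.erase i₂)) (fun T => insert i₂ (T.erase i₁))
          hmem
        · intro T hT
          simp only [Finset.mem_filter, Finset.mem_powersetCard, Finset.subset_erase] at hT ⊢
          obtain ⟨⟨⟨hTS, hi2T⟩, hcard⟩, hi1T⟩ := hT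
          refine ⟨⟨⟨?_, ?_⟩, ?_⟩, Finset.mem_insert_self _ _⟩
          · intro x hx
            rcases Finset.mem_insert.1 hx with rfl | hx
            · rwa [Finset.mem_Icc]
            · exact hTS (Finset.erase_subset _ _ hx)
          · intro hmem'
            rcases Finset.mem_insert.1 hmem' with h | h
            · exact hne h
            · exact (Finset.ne_of_mem_erase h) rfl
          · rw [Finset.card_insert_of_notMem (fun h => hi2T (Finset.erase_subset _ _ h)),
              Finset.card_erase_of_mem hi1T, hcard]
            omega
        · intro T hT
          simp only [Finset.mem_filter, Finset.mem_powersetCard, Finset.subset_erase] at hT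
          obtain ⟨⟨⟨hTS, hi1T⟩, hcard⟩, hi2T⟩ := hT
          rw [Finset.erase_insert (fun h => hi1T (Finset.erase_subset _ _ h)),
            Finset.insert_erase hi2T]
        · intro T hT
          simp only [Finset.mem_filter, Finset.mem_powersetCard, Finset.subset_erase] at hT
          obtain ⟨⟨⟨hTS, hi2T⟩, hcard⟩, hi1T⟩ := hT
          rw [Finset.erase_insert (fun h => hi2T (Finset.erase_subset _ _ h)),
            Finset.insert_erase hi1T]
        · intro T hT
          rfl
end

section
/- Let K and M be integers with 1 ≤ M ≤ K−1 and let λ_1 ≥ λ_2 ≥ ⋯ ≥ λ_K > 0 be real numbers. Define Γ₀ = min over i ∈ {K−M,…,K} of min{1, p({i}, {K−M,…,K}∖{i}) · p_W(1) / (p(1, {2,…,M+1}) · p_W(i))}, and define R_LB = [ (K−M) − (K − M − K/(M+1)) · Γ₀ · (p(1, {2,…,M+1}) / p_W(1)) · C(K−1, M) ]^{−1}, where K/(M+1) denotes the real quotient. Then R_LB ≤ (M+1)/K. -/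
/-- `Γ₀ = min_{i ∈ {K−M,…,K}} min{1, p(i, {K−M,…,K}∖{i}) · p_W(1) / (p(1, {2,…,M+1}) · p_W(i))}`. -/
noncomputable def gamma0 (K M : ℕ) (lam : ℕ → ℝ) : ℝ :=
  (Finset.Icc (K - M) K).inf' (Finset.nonempty_Icc.mpr (Nat.sub_le K M))
    (fun i => min 1
      (pjoint K M lam i ((Finset.Icc (K - M) K).erase i) * pW K M lam 1
        / (pjoint K M lam 1 (Finset.Icc 2 (M + 1)) * pW K M lam i)))

/-- `Γ(w, s) = Γ₀ · p(1, {2,…,M+1}) · p_W(w) / (p(w, s) · p_W(1))`,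
with an arbitrary constant `g0` in place of `Γ₀`. -/
noncomputable def gammaWS (K M : ℕ) (lam : ℕ → ℝ) (g0 : ℝ) (w : ℕ) (s : Finset ℕ) : ℝ :=
  g0 * pjoint K M lam 1 (Finset.Icc 2 (M + 1)) * pW K M lam w
    / (pjoint K M lam w s * pW K M lam 1)

/-- The lower bound `R_LB` on the capacity achieved by the RCS scheme. -/
noncomputable def RLB (K M : ℕ) (lam : ℕ → ℝ) : ℝ :=
  ((K : ℝ) - M
    - ((K : ℝ) - M - (K : ℝ) / (M + 1)) * gamma0 K M lam
      * (pjoint K M lam 1 (Finset.Icc 2 (M + 1)) / pW K M lam 1)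
      * ((K - 1).choose M : ℝ))⁻¹

/-- A sum of `lam` over an `m`-subset of `{1,…,K}` is at most the sum over `{1,…,m}`. -/
lemma aux_sum_le_init {K : ℕ} (lam : ℕ → ℝ)
    (hmono : ∀ i j, 1 ≤ i → i ≤ j → j ≤ K → lam j ≤ lam i)
    (m : ℕ) (T : Finset ℕ) (hT : T ⊆ Finset.Icc 1 K) (hcard : T.card = m) :
    ∑ k ∈ T, lam k ≤ ∑ k ∈ Finset.Icc 1 m, lam k := by
  set f := T.orderEmbOfFin hcard with hf
  have hmem : ∀ j : Fin m, f j ∈ T := fun j => T.orderEmbOfFin_mem hcard j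
  have hstep : ∀ n, ∀ hn : n < m, n + 1 ≤ f ⟨n, hn⟩ := by
    intro n
    induction n with
    | zero =>
      intro hn
      have := hT (hmem ⟨0, hn⟩)
      simp only [Finset.mem_Icc] at this
      omega
    | succ k ih =>
      intro hn
      have h1 := ih (by omega)
      have h2 : f ⟨k, by omega⟩ < f ⟨k + 1, hn⟩ := f.strictMono (by simp [Fin.lt_def])
      omega
  have himg : Finset.image (⇑f) Finset.univ = T := by
    apply Finset.coe_injective
    rw [Finset.coe_image, Finset.coe_univ, Set.image_univ]
    exact T.range_orderEmbOfFin hcard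
  have h1 : ∑ k ∈ T, lam k = ∑ j : Fin m, lam (f j) := by
    rw [← himg, Finset.sum_image (fun a _ b _ h => f.injective h)]
  have h2 : ∑ k ∈ Finset.Icc 1 m, lam k = ∑ j : Fin m, lam (j + 1 : ℕ) := by
    have hIm : Finset.Icc 1 m = Finset.image (· + 1) (Finset.range m) := by
      ext x
      simp only [Finset.mem_Icc, Finset.mem_image, Finset.mem_range]
      constructor
      · rintro ⟨h1, h2⟩
        exact ⟨x - 1, by omega, by omega⟩
      · rintro ⟨a, ha, rfl⟩
        omega
    rw [hIm, Finset.sum_image (by intro a _ b _ h; simp only at h; omega)]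
    rw [← Fin.sum_univ_eq_sum_range (fun i => lam (i + 1)) m]
  rw [h1, h2]
  apply Finset.sum_le_sum
  intro j _
  have hj1 : (j : ℕ) + 1 ≤ f j := by
    have := hstep j.1 j.2
    simpa using this
  have hjK : f j ≤ K := by
    have := hT (hmem j)
    simp only [Finset.mem_Icc] at this
    exact this.2
  exact hmono ((j : ℕ) + 1) (f j) (by omega) hj1 hjK

lemma aux_lbar_pos {K : ℕ} (lam : ℕ → ℝ) (hpos : ∀ i, 1 ≤ i → i ≤ K → 0 < lam i)
    {w : ℕ} (hw : w ∈ Finset.Icc 1 K) {s : Finset ℕ} (hws : w ∉ s) :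
    0 < lbar K lam s := by
  apply Finset.sum_pos'
  · intro i hi
    simp only [Finset.mem_sdiff, Finset.mem_Icc] at hi
    exact (hpos i hi.1.1 hi.1.2).le
  · refine ⟨w, Finset.mem_sdiff.mpr ⟨hw, hws⟩, ?_⟩
    simp only [Finset.mem_Icc] at hw
    exact hpos w hw.1 hw.2

lemma aux_pjoint_pos {K M : ℕ} (lam : ℕ → ℝ) (hMK : M + 1 ≤ K)
    (hpos : ∀ i, 1 ≤ i → i ≤ K → 0 < lam i)
    {w : ℕ} (hw : w ∈ Finset.Icc 1 K) {s : Finset ℕ} (hws : w ∉ s) :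
    0 < pjoint K M lam w s := by
  have hlb := aux_lbar_pos lam hpos hw hws
  have hch : 0 < (K.choose M : ℝ) := by
    exact_mod_cast Nat.choose_pos (by omega)
  simp only [Finset.mem_Icc] at hw
  have := hpos w hw.1 hw.2
  unfold pjoint
  positivity

lemma aux_pW_pos {K M : ℕ} (lam : ℕ → ℝ) (hMK : M + 1 ≤ K)
    (hpos : ∀ i, 1 ≤ i → i ≤ K → 0 < lam i)
    {w : ℕ} (hw : w ∈ Finset.Icc 1 K) :
    0 < pW K M lam w := by
  apply Finset.sum_pos
  · intro s hs
    rw [Finset.mem_powersetCard] at hs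
    exact aux_pjoint_pos lam hMK hpos hw (fun h => (Finset.mem_erase.mp (hs.1 h)).1 rfl)
  · apply Finset.powersetCard_nonempty.mpr
    rw [Finset.card_erase_of_mem hw, Nat.card_Icc]
    omega

theorem stmt10 {K M : ℕ} (hM : 1 ≤ M) (hMK : M + 1 ≤ K) (lam : ℕ → ℝ)
    (hmono : ∀ i j, 1 ≤ i → i ≤ j → j ≤ K → lam j ≤ lam i)
    (hpos : ∀ i, 1 ≤ i → i ≤ K → 0 < lam i) :
    RLB K M lam ≤ ((M : ℝ) + 1) / K := by
  have hK1 : (1 : ℕ) ∈ Finset.Icc 1 K := by simp; omega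
  have hKK : (K : ℕ) ∈ Finset.Icc 1 K := by simp; omega
  -- positivity facts
  have hP1 : 0 < pjoint K M lam 1 (Finset.Icc 2 (M + 1)) :=
    aux_pjoint_pos lam hMK hpos hK1 (by simp)
  have hW1 : 0 < pW K M lam 1 := aux_pW_pos lam hMK hpos hK1
  have hWK : 0 < pW K M lam K := aux_pW_pos lam hMK hpos hKK
  set sK : Finset ℕ := (Finset.Icc (K - M) K).erase K with hsK
  have hKnotsK : K ∉ sK := Finset.notMem_erase _ _
  have hPK : 0 < pjoint K M lam K sK := aux_pjoint_pos lam hMK hpos hKK hKnotsK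
  -- p(K, sK) is minimal among p(K, s)
  have hmin : ∀ s ∈ Finset.powersetCard M ((Finset.Icc 1 K).erase K),
      pjoint K M lam K sK ≤ pjoint K M lam K s := by
    intro s hs
    rw [Finset.mem_powersetCard] at hs
    have hKnots : K ∉ s := fun h => (Finset.mem_erase.mp (hs.1 h)).1 rfl
    have hsub : s ⊆ Finset.Icc 1 K := hs.1.trans (Finset.erase_subset _ _)
    -- lbar s ≤ lbar sK
    have hlbar : lbar K lam s ≤ lbar K lam sK := by
      unfold lbar
      -- Icc 1 K \ sK = insert K (Icc 1 (K - M - 1))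
      have hset : Finset.Icc 1 K \ sK = insert K (Finset.Icc 1 (K - M - 1)) := by
        ext x
        simp only [hsK, Finset.mem_sdiff, Finset.mem_erase, Finset.mem_Icc,
          Finset.mem_insert]
        omega
      have hKnotmem : K ∉ Finset.Icc 1 (K - M - 1) := by simp; omega
      rw [hset, Finset.sum_insert hKnotmem]
      -- Icc 1 K \ s contains K
      have hKmem : K ∈ Finset.Icc 1 K \ s := Finset.mem_sdiff.mpr ⟨hKK, hKnots⟩
      rw [← Finset.insert_erase hKmem, Finset.sum_insert (Finset.notMem_erase _ _)]
      have hcard : ((Finset.Icc 1 K \ s).erase K).card = K - M - 1 := by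
        rw [Finset.card_erase_of_mem hKmem, Finset.card_sdiff_of_subset hsub, Nat.card_Icc, hs.2]
        omega
      have hsub2 : (Finset.Icc 1 K \ s).erase K ⊆ Finset.Icc 1 K :=
        (Finset.erase_subset _ _).trans (Finset.sdiff_subset)
      have := aux_sum_le_init lam hmono (K - M - 1) _ hsub2 hcard
      linarith
    -- conclude pjoint comparison
    have hlbs : 0 < lbar K lam s := aux_lbar_pos lam hpos hKK hKnots
    have hlbsK : 0 < lbar K lam sK := aux_lbar_pos lam hpos hKK hKnotsK
    unfold pjoint
    have hch : 0 < (K.choose M : ℝ) := by exact_mod_cast Nat.choose_pos (by omega)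
    have hlamK : 0 < lam K := hpos K (by omega) le_rfl
    have hdd := div_le_div_of_nonneg_left hlamK.le hlbs hlbar
    exact mul_le_mul_of_nonneg_left hdd (by positivity)
  -- pW K ≥ C(K-1, M) * p(K, sK)
  have hcardpow : (Finset.powersetCard M ((Finset.Icc 1 K).erase K)).card
      = (K - 1).choose M := by
    rw [Finset.card_powersetCard, Finset.card_erase_of_mem hKK, Nat.card_Icc]
    congr 1
  have hchoose : ((K - 1).choose M : ℝ) * pjoint K M lam K sK ≤ pW K M lam K := by
    have := Finset.card_nsmul_le_sum (Finset.powersetCard M ((Finset.Icc 1 K).erase K))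
      (pjoint K M lam K) (pjoint K M lam K sK) hmin
    rwa [hcardpow, nsmul_eq_mul] at this
  -- gamma0 bounds
  have hg_le : gamma0 K M lam
      ≤ pjoint K M lam K sK * pW K M lam 1
        / (pjoint K M lam 1 (Finset.Icc 2 (M + 1)) * pW K M lam K) := by
    have hKm : K ∈ Finset.Icc (K - M) K := by simp
    refine le_trans (Finset.inf'_le _ hKm) ?_
    exact min_le_right _ _
  have hg_nonneg : 0 ≤ gamma0 K M lam := by
    apply Finset.le_inf'
    intro i hi
    simp only [Finset.mem_Icc] at hi
    have hi1 : i ∈ Finset.Icc 1 K := by simp; omega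
    have hPi : 0 < pjoint K M lam i ((Finset.Icc (K - M) K).erase i) :=
      aux_pjoint_pos lam hMK hpos hi1 (Finset.notMem_erase _ _)
    have hWi : 0 < pW K M lam i := aux_pW_pos lam hMK hpos hi1
    apply le_min (by norm_num)
    positivity
  -- X := gamma0 * (P1 / W1) * C ≤ 1
  set C : ℝ := ((K - 1).choose M : ℝ) with hC
  have hCpos : 0 < C := by
    rw [hC]
    exact_mod_cast Nat.choose_pos (by omega)
  set X : ℝ := gamma0 K M lam
      * (pjoint K M lam 1 (Finset.Icc 2 (M + 1)) / pW K M lam 1) * C with hX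
  have hX0 : 0 ≤ X := by
    rw [hX]
    have : 0 ≤ pjoint K M lam 1 (Finset.Icc 2 (M + 1)) / pW K M lam 1 := by positivity
    positivity
  have hX1 : X ≤ 1 := by
    have h1 : X ≤ (pjoint K M lam K sK * pW K M lam 1
        / (pjoint K M lam 1 (Finset.Icc 2 (M + 1)) * pW K M lam K))
        * (pjoint K M lam 1 (Finset.Icc 2 (M + 1)) / pW K M lam 1) * C := by
      rw [hX]
      have hr : 0 ≤ pjoint K M lam 1 (Finset.Icc 2 (M + 1)) / pW K M lam 1 := by positivity
      exact mul_le_mul_of_nonneg_right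
        (mul_le_mul_of_nonneg_right hg_le hr) hCpos.le
    have h2 : (pjoint K M lam K sK * pW K M lam 1
        / (pjoint K M lam 1 (Finset.Icc 2 (M + 1)) * pW K M lam K))
        * (pjoint K M lam 1 (Finset.Icc 2 (M + 1)) / pW K M lam 1) * C
        = pjoint K M lam K sK * C / pW K M lam K := by
      field_simp
    rw [h2] at h1
    refine h1.trans ?_
    rw [div_le_one hWK]
    calc pjoint K M lam K sK * C = C * pjoint K M lam K sK := by ring
      _ ≤ pW K M lam K := hchoose
  -- arithmetic conclusion
  have hMr : (1 : ℝ) ≤ (M : ℝ) := by exact_mod_cast hM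
  have hKr : (M : ℝ) + 1 ≤ (K : ℝ) := by exact_mod_cast hMK
  have hM1pos : (0 : ℝ) < (M : ℝ) + 1 := by linarith
  have hKpos : (0 : ℝ) < (K : ℝ) := by linarith
  have hc : 0 ≤ (K : ℝ) - M - (K : ℝ) / (M + 1) := by
    rw [sub_nonneg, div_le_iff₀ hM1pos]
    nlinarith
  have hA : (K : ℝ) / (M + 1)
      ≤ (K : ℝ) - M - ((K : ℝ) - M - (K : ℝ) / (M + 1)) * X := by
    have := mul_le_mul_of_nonneg_left hX1 hc
    linarith
  have hQ : (0 : ℝ) < (K : ℝ) / (M + 1) := by positivity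
  have hAX : RLB K M lam = ((K : ℝ) - M - ((K : ℝ) - M - (K : ℝ) / (M + 1)) * X)⁻¹ := by
    rw [RLB, hX, hC]
    ring_nf
  rw [hAX]
  calc ((K : ℝ) - M - ((K : ℝ) - M - (K : ℝ) / (M + 1)) * X)⁻¹
      ≤ ((K : ℝ) / (M + 1))⁻¹ := by
        apply inv_anti₀ hQ hA
    _ = ((M : ℝ) + 1) / K := by rw [inv_div]
end

section
/- Let K and M be integers with 1 ≤ M and K > M+1, and let λ_1 ≥ λ_2 ≥ ⋯ ≥ λ_K > 0 be real numbers. Define Γ₀ = min over i ∈ {K−M,…,K} of min{1, p({i}, {K−M,…,K}∖{i}) · p_W(1) / (p(1, {2,…,M+1}) · p_W(i))}, and define R_LB = [ (K−M) − (K − M − K/(M+1)) · Γ₀ · (p(1, {2,…,M+1}) / p_W(1)) · C(K−1, M) ]^{−1}, where K/(M+1) denotes the real quotient. Then R_LB > 1/(K−M). -/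
lemma lbar_pos_s11 {K : ℕ} {lam : ℕ → ℝ} (hpos : ∀ i, 1 ≤ i → i ≤ K → 0 < lam i)
    {s : Finset ℕ} (h : (Finset.Icc 1 K \ s).Nonempty) : 0 < lbar K lam s := by
  refine Finset.sum_pos (fun k hk => ?_) h
  rw [Finset.mem_sdiff, Finset.mem_Icc] at hk
  exact hpos k hk.1.1 hk.1.2

lemma pjoint_pos {K M : ℕ} {lam : ℕ → ℝ} (hMK : M ≤ K)
    (hpos : ∀ i, 1 ≤ i → i ≤ K → 0 < lam i) {w : ℕ} (hw1 : 1 ≤ w) (hwK : w ≤ K)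
    {s : Finset ℕ} (h : (Finset.Icc 1 K \ s).Nonempty) :
    0 < pjoint K M lam w s := by
  have h1 : (0 : ℝ) < (K.choose M : ℝ) := by
    exact_mod_cast Nat.choose_pos hMK
  exact mul_pos (by positivity) (div_pos (hpos w hw1 hwK) (lbar_pos_s11 hpos h))

lemma pW_pos {K M : ℕ} {lam : ℕ → ℝ} (hM : 1 ≤ M) (hMK : M + 1 ≤ K)
    (hpos : ∀ i, 1 ≤ i → i ≤ K → 0 < lam i) {w : ℕ} (hw1 : 1 ≤ w) (hwK : w ≤ K) :
    0 < pW K M lam w := by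
  have hcard : ((Finset.Icc 1 K).erase w).card = K - 1 := by
    rw [Finset.card_erase_of_mem (Finset.mem_Icc.mpr ⟨hw1, hwK⟩), Nat.card_Icc]
    omega
  refine Finset.sum_pos (fun s hs => ?_) ?_
  · rw [Finset.mem_powersetCard] at hs
    refine pjoint_pos (by omega) hpos hw1 hwK ⟨w, ?_⟩
    rw [Finset.mem_sdiff, Finset.mem_Icc]
    exact ⟨⟨hw1, hwK⟩, fun hmem => (Finset.mem_erase.mp (hs.1 hmem)).1 rfl⟩
  · rw [Finset.powersetCard_nonempty, hcard]
    omega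

/-- If `T` and `s` have the same cardinality, every element of `T \ s` has index `≥ m`
and every element of `s \ T` has index `≤ m`, then the (antitone) sum over `T` is at most
that over `s`. -/
lemma sum_top_le {K : ℕ} {lam : ℕ → ℝ}
    (hmono : ∀ i j, 1 ≤ i → i ≤ j → j ≤ K → lam j ≤ lam i)
    (m : ℕ) (hm1 : 1 ≤ m) (hmK : m ≤ K) (T s : Finset ℕ)
    (hcard : T.card = s.card)
    (hT : ∀ k ∈ T \ s, m ≤ k ∧ k ≤ K)
    (hs : ∀ k ∈ s \ T, 1 ≤ k ∧ k ≤ m) :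
    ∑ k ∈ T, lam k ≤ ∑ k ∈ s, lam k := by
  have key : ∑ k ∈ T \ s, lam k ≤ ∑ k ∈ s \ T, lam k := by
    have h1 : ∑ k ∈ T \ s, lam k ≤ (T \ s).card • lam m :=
      Finset.sum_le_card_nsmul _ _ _ (fun k hk => hmono m k hm1 (hT k hk).1 (hT k hk).2)
    have h2 : (s \ T).card • lam m ≤ ∑ k ∈ s \ T, lam k :=
      Finset.card_nsmul_le_sum _ _ _ (fun k hk => hmono k m (hs k hk).1 (hs k hk).2 hmK)
    have h3 : (T \ s).card = (s \ T).card := Finset.card_sdiff_comm hcard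
    calc ∑ k ∈ T \ s, lam k ≤ (T \ s).card • lam m := h1
    _ = (s \ T).card • lam m := by rw [h3]
    _ ≤ ∑ k ∈ s \ T, lam k := h2
  have hTsplit : ∑ k ∈ T \ s, lam k + ∑ k ∈ T ∩ s, lam k = ∑ k ∈ T, lam k := by
    rw [← Finset.sdiff_inter_self_left T s]
    exact Finset.sum_sdiff (Finset.inter_subset_left)
  have hssplit : ∑ k ∈ s \ T, lam k + ∑ k ∈ T ∩ s, lam k = ∑ k ∈ s, lam k := by
    rw [Finset.inter_comm T s, ← Finset.sdiff_inter_self_left s T]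
    exact Finset.sum_sdiff (Finset.inter_subset_left)
  linarith

theorem stmt11 {K M : ℕ} (hM : 1 ≤ M) (hMK : M + 1 < K) (lam : ℕ → ℝ)
    (hmono : ∀ i j, 1 ≤ i → i ≤ j → j ≤ K → lam j ≤ lam i)
    (hpos : ∀ i, 1 ≤ i → i ≤ K → 0 < lam i) :
    1 / ((K : ℝ) - M) < RLB K M lam := by
  have hMK' : M ≤ K := by omega
  have h1K : 1 ≤ K := by omega
  set c := pjoint K M lam 1 (Finset.Icc 2 (M + 1)) with hc
  set P := pW K M lam 1 with hP
  set g := gamma0 K M lam with hg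
  set N := (((K - 1).choose M : ℕ) : ℝ) with hN
  set T := (Finset.Icc (K - M) K).erase K with hT
  set q := pjoint K M lam K T with hq
  set Q := pW K M lam K with hQ
  -- basic positivity
  have hcpos : 0 < c := by
    refine pjoint_pos hMK' hpos le_rfl h1K ⟨1, ?_⟩
    simp [Finset.mem_Icc, h1K]
  have hPpos : 0 < P := pW_pos hM (le_of_lt hMK) hpos le_rfl h1K
  have hQpos : 0 < Q := pW_pos hM (le_of_lt hMK) hpos h1K le_rfl
  have hqpos : 0 < q := by
    refine pjoint_pos hMK' hpos h1K le_rfl ⟨K, ?_⟩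
    simp [Finset.mem_sdiff, Finset.mem_Icc, h1K, hT]
  have hNpos : 0 < N := by
    rw [hN]
    exact_mod_cast Nat.choose_pos (by omega : M ≤ K - 1)
  -- key inequality : q * N ≤ Q
  have hqN : q * N ≤ Q := by
    have hcard : ((Finset.Icc 1 K).erase K).card = K - 1 := by
      rw [Finset.card_erase_of_mem (Finset.mem_Icc.mpr ⟨h1K, le_rfl⟩), Nat.card_Icc]
      omega
    have hqle : ∀ s ∈ Finset.powersetCard M ((Finset.Icc 1 K).erase K),
        q ≤ pjoint K M lam K s := by
      intro s hs
      rw [Finset.mem_powersetCard] at hs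
      have hsub : s ⊆ Finset.Icc 1 K := fun x hx => Finset.erase_subset _ _ (hs.1 hx)
      have hTsub : T ⊆ Finset.Icc 1 K := by
        intro x hx
        rw [hT, Finset.mem_erase, Finset.mem_Icc] at hx
        rw [Finset.mem_Icc]
        omega
      have hTcard : T.card = M := by
        rw [hT, Finset.card_erase_of_mem (Finset.mem_Icc.mpr ⟨Nat.sub_le K M, le_rfl⟩),
          Nat.card_Icc]
        omega
      -- sum over T ≤ sum over s (T has the largest indices, i.e. smallest lam values)
      have hsumle : ∑ k ∈ T, lam k ≤ ∑ k ∈ s, lam k := by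
        refine sum_top_le hmono (K - M) (by omega) (by omega) T s (by rw [hTcard, hs.2]) ?_ ?_
        · intro k hk
          have h3 : k ∈ T := (Finset.mem_sdiff.mp hk).1
          rw [hT, Finset.mem_erase, Finset.mem_Icc] at h3
          omega
        · intro k hk
          obtain ⟨hks, hkT⟩ := Finset.mem_sdiff.mp hk
          have h2 := Finset.mem_erase.mp (hs.1 hks)
          rw [Finset.mem_Icc] at h2
          rw [hT, Finset.mem_erase, Finset.mem_Icc] at hkT
          push_neg at hkT
          constructor
          · exact h2.2.1
          · by_contra hcon
            push_neg at hcon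
            have := hkT (by omega)
            omega
      -- hence lbar s ≤ lbar T
      have hlbar : lbar K lam s ≤ lbar K lam T := by
        rw [lbar, lbar, Finset.sum_sdiff_eq_sub hsub, Finset.sum_sdiff_eq_sub hTsub]
        linarith
      have hlbs : 0 < lbar K lam s := by
        refine lbar_pos_s11 hpos ⟨K, ?_⟩
        rw [Finset.mem_sdiff, Finset.mem_Icc]
        exact ⟨⟨h1K, le_rfl⟩, fun hmem => (Finset.mem_erase.mp (hs.1 hmem)).1 rfl⟩
      rw [hq, pjoint, pjoint]
      have hchoose : (0 : ℝ) < (K.choose M : ℝ) := by exact_mod_cast Nat.choose_pos hMK'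
      gcongr
      exact (hpos K h1K le_rfl).le
    calc q * N = ∑ _s ∈ Finset.powersetCard M ((Finset.Icc 1 K).erase K), q := by
          rw [Finset.sum_const, Finset.card_powersetCard, hcard, nsmul_eq_mul, mul_comm, hN]
    _ ≤ ∑ s ∈ Finset.powersetCard M ((Finset.Icc 1 K).erase K), pjoint K M lam K s :=
          Finset.sum_le_sum hqle
    _ = Q := rfl
  -- gamma0 bounds
  have hKmem : K ∈ Finset.Icc (K - M) K := Finset.mem_Icc.mpr ⟨Nat.sub_le K M, le_rfl⟩
  have hgle : g ≤ q * P / (c * Q) := by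
    calc g ≤ min 1 (q * P / (c * Q)) := by
          rw [hg, gamma0]
          exact Finset.inf'_le _ hKmem
    _ ≤ q * P / (c * Q) := min_le_right _ _
  have hgpos : 0 < g := by
    rw [hg, gamma0, Finset.lt_inf'_iff]
    intro i hi
    rw [Finset.mem_Icc] at hi
    have hi1 : 1 ≤ i := by omega
    have hiK : i ≤ K := hi.2
    refine lt_min one_pos (div_pos (mul_pos ?_ hPpos) (mul_pos hcpos ?_))
    · refine pjoint_pos hMK' hpos hi1 hiK ⟨i, ?_⟩
      rw [Finset.mem_sdiff, Finset.mem_Icc]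
      exact ⟨⟨hi1, hiK⟩, fun hmem => (Finset.mem_erase.mp hmem).1 rfl⟩
    · exact pW_pos hM (le_of_lt hMK) hpos hi1 hiK
  -- the scalar factor is at most 1
  have hfactor : g * (c / P) * N ≤ 1 := by
    have h1 : g * (c / P) * N ≤ (q * P / (c * Q)) * (c / P) * N := by
      have hcP : 0 ≤ c / P := le_of_lt (div_pos hcpos hPpos)
      have := mul_le_mul_of_nonneg_right (mul_le_mul_of_nonneg_right hgle hcP) hNpos.le
      linarith
    have h2 : (q * P / (c * Q)) * (c / P) * N = q * N / Q := by
      field_simp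
    rw [h2] at h1
    calc g * (c / P) * N ≤ q * N / Q := h1
    _ ≤ 1 := (div_le_one hQpos).mpr hqN
  -- arithmetic on D
  have hKr : ((M : ℝ) + 2) ≤ (K : ℝ) := by exact_mod_cast (by omega : M + 2 ≤ K)
  have hMr : (1 : ℝ) ≤ (M : ℝ) := by exact_mod_cast hM
  have hDdef : (0 : ℝ) < (K : ℝ) / (M + 1) := by positivity
  have hDpos : 0 < (K : ℝ) - M - (K : ℝ) / (M + 1) := by
    rw [sub_pos, div_lt_iff₀ (by positivity : (0:ℝ) < (M:ℝ) + 1)]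
    nlinarith
  set D := (K : ℝ) - M - (K : ℝ) / (M + 1) with hD
  set B := D * g * (c / P) * N with hB
  have hBpos : 0 < B := by
    rw [hB]
    exact mul_pos (mul_pos (mul_pos hDpos hgpos) (div_pos hcpos hPpos)) hNpos
  have hBD : B ≤ D := by
    have : B = D * (g * (c / P) * N) := by rw [hB]; ring
    rw [this]
    calc D * (g * (c / P) * N) ≤ D * 1 := by
          exact mul_le_mul_of_nonneg_left hfactor hDpos.le
    _ = D := mul_one D
  have hBlt : B < (K : ℝ) - M := by
    calc B ≤ D := hBD
    _ < (K : ℝ) - M := by rw [hD]; linarith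
  -- conclude
  have hRLB : RLB K M lam = ((K : ℝ) - M - B)⁻¹ := by
    rw [RLB, hB, hD, hg, hc, hP, hN]
  rw [hRLB, inv_eq_one_div]
  exact one_div_lt_one_div_of_lt (by linarith) (by linarith)
end

section
/- Let K and M be integers with 1 ≤ M ≤ K−1 and let λ_1, …, λ_K > 0 be real numbers. Then Σ_{w∈{1,…,K}} Σ_{s} p(w,s) = 1, where the inner sum is over all M-element subsets s of {1,…,K}∖{w}; consequently Σ_{w∈{1,…,K}} p_W(w) = 1, i.e., p is a well-defined joint probability mass function on pairs (w,s). -/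
theorem stmt15 {K M : ℕ} (hM : 1 ≤ M) (hMK : M + 1 ≤ K) (lam : ℕ → ℝ)
    (hpos : ∀ i, 1 ≤ i → i ≤ K → 0 < lam i) :
    (∑ w ∈ Finset.Icc 1 K,
        ∑ s ∈ Finset.powersetCard M ((Finset.Icc 1 K).erase w), pjoint K M lam w s) = 1 ∧
    (∑ w ∈ Finset.Icc 1 K, pW K M lam w) = 1 := by
  have key : (∑ w ∈ Finset.Icc 1 K,
      ∑ s ∈ Finset.powersetCard M ((Finset.Icc 1 K).erase w), pjoint K M lam w s) = 1 := by
    have hswap : (∑ w ∈ Finset.Icc 1 K,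
        ∑ s ∈ Finset.powersetCard M ((Finset.Icc 1 K).erase w), pjoint K M lam w s)
        = ∑ s ∈ Finset.powersetCard M (Finset.Icc 1 K),
            ∑ w ∈ Finset.Icc 1 K \ s, pjoint K M lam w s := by
      apply Finset.sum_comm'
      intro w s
      simp only [Finset.mem_powersetCard, Finset.mem_sdiff, Finset.subset_erase]
      constructor
      · rintro ⟨hw, ⟨hs, hws⟩, hc⟩
        exact ⟨⟨hw, hws⟩, hs, hc⟩
      · rintro ⟨⟨hw, hws⟩, hs, hc⟩
        exact ⟨hw, ⟨hs, hws⟩, hc⟩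
    rw [hswap]
    have hinner : ∀ s ∈ Finset.powersetCard M (Finset.Icc 1 K),
        (∑ w ∈ Finset.Icc 1 K \ s, pjoint K M lam w s) = 1 / (K.choose M : ℝ) := by
      intro s hs
      rw [Finset.mem_powersetCard] at hs
      have hlbar : 0 < lbar K lam s := by
        apply Finset.sum_pos
        · intro i hi
          rw [Finset.mem_sdiff, Finset.mem_Icc] at hi
          exact hpos i hi.1.1 hi.1.2
        · -- nonempty: card (Icc 1 K) = K > M = card s
          rw [← Finset.card_pos, Finset.card_sdiff_of_subset hs.1, Nat.card_Icc, hs.2]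
          omega
      unfold pjoint
      rw [← Finset.mul_sum, ← Finset.sum_div]
      show (1 / (K.choose M : ℝ)) * (lbar K lam s / lbar K lam s) = _
      rw [div_self hlbar.ne', mul_one]
    rw [Finset.sum_congr rfl hinner, Finset.sum_const,
      Finset.card_powersetCard, Nat.card_Icc, Nat.add_sub_cancel, nsmul_eq_mul]
    have : (K.choose M : ℝ) ≠ 0 := by
      exact_mod_cast Nat.choose_pos (by omega : M ≤ K) |>.ne'
    field_simp
  exact ⟨key, by simpa [pW] using key⟩
end
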